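/- arXiv:2010.13199 — 2 statements merged into one kernel-verified Lean document; each statement's English description precedes it below -/
import Mathlib

section
/- Let M = [a,b) and N = [c,d) be interval modules (0 ≤ a < b, 0 ≤ c < d) with m₁ < m₂, and set r = min{|a−d|, |b−c|} and s = max{|a−d|, |b−c|}. Then m₁ < m₂ < r ≤ s and: (a) for every ε with m₁ ≤ ε < m₂, both Hom(M, N·ε) ≠ 0 and Hom(N, M·ε) ≠ 0, and at least one of Hom(M, M·2ε), Hom(N, N·2ε) is nonzero; (b) for every ε with m₂ ≤ ε < r, both Hom(M, N·ε) ≠ 0 and Hom(N, M·ε) ≠ 0, while Hom(M, M·2ε) = Hom(N, N·2ε) = 0; (c) for every ε with r ≤ ε < s, exactly one of Hom(M, N·ε), Hom(N, M·ε) is nonzero and Hom(M, M·2ε) = Hom(N, N·2ε) = 0; (d) for every ε ≥ s, all four spaces are zero. (This expresses that for interval modules the progression of varieties of ε-interleavings in the case m₁ < m₂ is: hyperbola, plane, axis, origin if r < s, and hyperbola, plane, origin if r = s.) -/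
open scoped NNReal

/-- A persistence module: a functor from `[0,∞)` to real vector spaces. -/
structure PM where
  V : ℝ≥0 → Type
  [grp : ∀ x, AddCommGroup (V x)]
  [mod : ∀ x, Module ℝ (V x)]
  map : ∀ {x y : ℝ≥0}, x ≤ y → (V x →ₗ[ℝ] V y)
  map_id : ∀ x : ℝ≥0, map (le_refl x) = LinearMap.id
  map_comp : ∀ {x y z : ℝ≥0} (h1 : x ≤ y) (h2 : y ≤ z),
    (map h2).comp (map h1) = map (h1.trans h2)

attribute [instance] PM.grp PM.mod

/-- A morphism of persistence modules. -/
structure PM.Hom (M N : PM) where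
  app : ∀ x : ℝ≥0, M.V x →ₗ[ℝ] N.V x
  comm : ∀ {x y : ℝ≥0} (h : x ≤ y), (app y).comp (M.map h) = (N.map h).comp (app x)

/-- The shifted module `M·ε`. -/
def PM.shift (M : PM) (ε : ℝ≥0) : PM where
  V x := M.V (x + ε)
  grp x := inferInstance
  mod x := inferInstance
  map h := M.map (add_le_add h le_rfl)
  map_id x := M.map_id (x + ε)
  map_comp h1 h2 := M.map_comp _ _

noncomputable def intervalSub (α β : ℝ) (x : ℝ≥0) : Submodule ℝ ℝ :=
  if α ≤ (x : ℝ) ∧ (x : ℝ) < β then ⊤ else ⊥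

/-- The interval module `[α,β)`. -/
noncomputable def intervalModule (α β : ℝ) : PM where
  V x := ↥(intervalSub α β x)
  grp x := inferInstance
  mod x := inferInstance
  map {x y} h := LinearMap.codRestrict _
      ((if α ≤ (x : ℝ) ∧ (y : ℝ) < β then (1 : ℝ) else 0) • (intervalSub α β x).subtype)
      (by
        intro v
        by_cases hy : α ≤ (y : ℝ) ∧ (y : ℝ) < β
        · simp [intervalSub, hy]
        · have hc : ¬(α ≤ (x : ℝ) ∧ (y : ℝ) < β) := by
            intro hc
            exact hy ⟨le_trans hc.1 (by exact_mod_cast h), hc.2⟩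
          rw [if_neg hc, zero_smul, LinearMap.zero_apply]
          exact Submodule.zero_mem _)
  map_id x := by
    ext v
    by_cases hx : α ≤ (x : ℝ) ∧ (x : ℝ) < β
    · simp [hx]
    · have hv : (v : ℝ) = 0 := by
        have h2 := v.2
        simp only [intervalSub, if_neg hx, Submodule.mem_bot] at h2
        exact h2
      simp [hx, hv]
  map_comp {x y z} h1 h2 := by
    ext v
    by_cases hC : α ≤ (x : ℝ) ∧ (z : ℝ) < β
    · have hA : α ≤ (x : ℝ) ∧ (y : ℝ) < β :=
        ⟨hC.1, lt_of_le_of_lt (by exact_mod_cast h2) hC.2⟩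
      have hB : α ≤ (y : ℝ) ∧ (z : ℝ) < β :=
        ⟨le_trans hC.1 (by exact_mod_cast h1), hC.2⟩
      simp [hA, hB, hC]
    · rcases not_and_or.mp hC with hx | hz
      · have hA : ¬(α ≤ (x : ℝ) ∧ (y : ℝ) < β) := fun h => hx h.1
        simp [hA, hC]
        split_ifs <;> simp
      · have hB : ¬(α ≤ (y : ℝ) ∧ (z : ℝ) < β) := fun h => hz h.2
        simp [hB, hC]

/-- `Hom(M,N) ≠ {0}`: there is a nonzero morphism from `M` to `N`. -/
def HomNeZero (M N : PM) : Prop := ∃ F : PM.Hom M N, ∃ x, F.app x ≠ 0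

/-- `S_{M,N} = {x ≥ 0 : Hom(M, N·x) ≠ {0}}`. -/
noncomputable def Sset (M N : PM) : Set ℝ :=
  {x : ℝ | 0 ≤ x ∧ HomNeZero M (N.shift x.toNNReal)}

/-- The canonical morphism `Π_M^{M·τ} : M → M·τ`. -/
def PM.pi (M : PM) (τ : ℝ≥0) : M.Hom (M.shift τ) where
  app x := M.map le_self_add
  comm {x y} h := by
    show (M.map le_self_add).comp (M.map h) =
      (M.map (add_le_add h le_rfl)).comp (M.map le_self_add)
    rw [M.map_comp, M.map_comp]

/-- The pair `(Φ, Ψ)` is an `ε`-interleaving between `M` and `N`: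
`(Ψ·ε) ∘ Φ = Π_M^{M·2ε}` and `(Φ·ε) ∘ Ψ = Π_N^{N·2ε}` (expressed pointwise). -/
def IsInterleaving (M N : PM) (ε : ℝ≥0)
    (Φ : M.Hom (N.shift ε)) (Ψ : N.Hom (M.shift ε)) : Prop :=
  (∀ x : ℝ≥0, (Ψ.app (x + ε)).comp (Φ.app x) =
      M.map (le_self_add.trans le_self_add : x ≤ x + ε + ε)) ∧
  (∀ x : ℝ≥0, (Φ.app (x + ε)).comp (Ψ.app x) =
      N.map (le_self_add.trans le_self_add : x ≤ x + ε + ε))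

lemma hcoe (ε : ℝ) (hε : 0 ≤ ε) (x : ℝ≥0) :
    ((x + ε.toNNReal : ℝ≥0) : ℝ) = (x : ℝ) + ε := by
  push_cast
  rw [Real.coe_toNNReal _ hε]

def valIM {α β : ℝ} {x : ℝ≥0} (v : (intervalModule α β).V x) : ℝ := Subtype.val v

lemma intervalModule_map_coe (α β : ℝ) {x y : ℝ≥0} (h : x ≤ y)
    (v : (intervalModule α β).V x) :
    valIM ((intervalModule α β).map h v)
      = (if α ≤ (x:ℝ) ∧ (y:ℝ) < β then (1:ℝ) else 0) * valIM v := rfl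

lemma valIM_zero {α β : ℝ} {x : ℝ≥0} (hx : ¬(α ≤ (x:ℝ) ∧ (x:ℝ) < β))
    (v : (intervalModule α β).V x) : valIM v = 0 := by
  have h2 : valIM v ∈ intervalSub α β x := v.2
  simp only [intervalSub, if_neg hx, Submodule.mem_bot] at h2
  exact h2

lemma valIM_inj {α β : ℝ} {x : ℝ≥0} {v w : (intervalModule α β).V x}
    (h : valIM v = valIM w) : v = w := Subtype.ext h

lemma valIM_zero' {α β : ℝ} {x : ℝ≥0} : valIM (0 : (intervalModule α β).V x) = 0 := rfl

lemma shift_map_coe (α β : ℝ) (ε' : ℝ≥0) {x y : ℝ≥0} (h : x ≤ y)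
    (v : ((intervalModule α β).shift ε').V x) :
    valIM (((intervalModule α β).shift ε').map h v)
      = (if α ≤ ((x+ε' : ℝ≥0):ℝ) ∧ ((y+ε' : ℝ≥0):ℝ) < β then (1:ℝ) else 0) * valIM v := rfl

noncomputable def appF (a b c d ε : ℝ) (hε : 0 ≤ ε) (h1 : c ≤ a + ε) (x : ℝ≥0) :
    (intervalModule a b).V x →ₗ[ℝ] ((intervalModule c d).shift ε.toNNReal).V x :=
  LinearMap.codRestrict (intervalSub c d (x + ε.toNNReal))
    ((if a ≤ (x:ℝ) ∧ (x:ℝ) + ε < d then (1:ℝ) else 0) • (intervalSub a b x).subtype)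
    (by
      intro v
      by_cases hx : a ≤ (x:ℝ) ∧ (x:ℝ) + ε < d
      · have hkey : c ≤ ((x + ε.toNNReal : ℝ≥0):ℝ) ∧ ((x + ε.toNNReal : ℝ≥0):ℝ) < d := by
          rw [hcoe ε hε x]
          exact ⟨by linarith [hx.1], hx.2⟩
        have ht : intervalSub c d (x + ε.toNNReal) = ⊤ := by
          rw [intervalSub, if_pos hkey]
        rw [ht]; exact Submodule.mem_top
      · rw [if_neg hx, zero_smul]
        exact Submodule.zero_mem _)

lemma appF_val (a b c d ε : ℝ) (hε : 0 ≤ ε) (h1 : c ≤ a + ε) (x : ℝ≥0)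
    (v : (intervalModule a b).V x) :
    valIM (appF a b c d ε hε h1 x v)
      = (if a ≤ (x:ℝ) ∧ (x:ℝ) + ε < d then (1:ℝ) else 0) * valIM v := rfl

noncomputable def homOf (a b c d ε : ℝ) (hε : 0 ≤ ε) (h1 : c ≤ a + ε) (h3 : d ≤ b + ε) :
    PM.Hom (intervalModule a b) ((intervalModule c d).shift ε.toNNReal) where
  app x := appF a b c d ε hε h1 x
  comm {x y} h := by
    apply LinearMap.ext
    intro v
    apply valIM_inj
    simp only [LinearMap.comp_apply]
    rw [appF_val, intervalModule_map_coe, shift_map_coe, appF_val,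
      hcoe ε hε x, hcoe ε hε y]
    have hxy : (x:ℝ) ≤ (y:ℝ) := by exact_mod_cast h
    by_cases hv : a ≤ (x:ℝ) ∧ (x:ℝ) < b
    · by_cases h' : (y:ℝ) + ε < d
      · have c1 : a ≤ (y:ℝ) ∧ (y:ℝ) + ε < d := ⟨le_trans hv.1 hxy, h'⟩
        have c2 : a ≤ (x:ℝ) ∧ (y:ℝ) < b := ⟨hv.1, by linarith⟩
        have c3 : c ≤ (x:ℝ) + ε ∧ (y:ℝ) + ε < d := ⟨by linarith [hv.1], h'⟩
        have c4 : a ≤ (x:ℝ) ∧ (x:ℝ) + ε < d := ⟨hv.1, by linarith⟩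
        rw [if_pos c1, if_pos c2, if_pos c3, if_pos c4]
      · have c1 : ¬(a ≤ (y:ℝ) ∧ (y:ℝ) + ε < d) := fun hh => h' hh.2
        have c3 : ¬(c ≤ (x:ℝ) + ε ∧ (y:ℝ) + ε < d) := fun hh => h' hh.2
        rw [if_neg c1, if_neg c3]; ring
    · rw [valIM_zero hv v]; ring

lemma app_zero_src {M : PM} (a b : ℝ) (F : PM.Hom (intervalModule a b) M) (x : ℝ≥0)
    (hx : ¬(a ≤ (x:ℝ) ∧ (x:ℝ) < b)) : F.app x = 0 := by
  apply LinearMap.ext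
  intro v
  have hv : v = 0 := valIM_inj (by rw [valIM_zero hx v, valIM_zero'])
  rw [hv, map_zero]
  rfl

lemma app_zero_tgt (a b c d : ℝ) (ε' : ℝ≥0)
    (F : PM.Hom (intervalModule a b) ((intervalModule c d).shift ε')) (x : ℝ≥0)
    (hx : ¬(c ≤ ((x + ε' : ℝ≥0):ℝ) ∧ ((x + ε' : ℝ≥0):ℝ) < d)) : F.app x = 0 := by
  apply LinearMap.ext
  intro v
  apply valIM_inj
  rw [valIM_zero hx (F.app x v)]
  rfl

lemma hom_iff (a b c d : ℝ) (ha : 0 ≤ a) (hab : a < b) (hcd : c < d) (ε : ℝ) (hε : 0 ≤ ε) :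
    HomNeZero (intervalModule a b) ((intervalModule c d).shift ε.toNNReal) ↔
      (c ≤ a + ε ∧ a + ε < d ∧ d ≤ b + ε) := by
  constructor
  · rintro ⟨F, x, hFx⟩
    by_cases hsrc : a ≤ (x:ℝ) ∧ (x:ℝ) < b
    · by_cases htgt : c ≤ ((x + ε.toNNReal : ℝ≥0):ℝ) ∧ ((x + ε.toNNReal : ℝ≥0):ℝ) < d
      · rw [hcoe ε hε x] at htgt
        refine ⟨?_, by linarith [hsrc.1, htgt.2], ?_⟩
        · -- c ≤ a + ε
          by_contra hcon
          push_neg at hcon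
          apply hFx
          apply LinearMap.ext
          intro v
          have hx0 : a.toNNReal ≤ x := Real.toNNReal_le_iff_le_coe.mpr hsrc.1
          have ha0 : ((a.toNNReal : ℝ≥0):ℝ) = a := Real.coe_toNNReal _ ha
          have hmem : valIM v ∈ intervalSub a b a.toNNReal := by
            rw [intervalSub, if_pos (by rw [ha0]; exact ⟨le_refl a, hab⟩)]
            exact Submodule.mem_top
          set v₀ : (intervalModule a b).V a.toNNReal := ⟨valIM v, hmem⟩ with hv₀
          have hmap : (intervalModule a b).map hx0 v₀ = v := by
            apply valIM_inj
            rw [intervalModule_map_coe, ha0, if_pos ⟨le_refl a, hsrc.2⟩, one_mul]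
            rfl
          have hcomm := congrArg (fun G => valIM (G v₀))
            (F.comm (x := a.toNNReal) (y := x) hx0)
          simp only [LinearMap.comp_apply] at hcomm
          rw [hmap] at hcomm
          have hz : F.app a.toNNReal v₀ = 0 := by
            apply valIM_inj
            exact valIM_zero (x := a.toNNReal + ε.toNNReal)
              (by rw [hcoe ε hε, ha0]; intro hh; linarith [hh.1]) _
          rw [hz, map_zero] at hcomm
          apply valIM_inj
          rw [hcomm]
          rfl
        · -- d ≤ b + ε
          by_contra hcon
          push_neg at hcon
          apply hFx
          apply LinearMap.ext
          intro v
          have hxb : x ≤ b.toNNReal := by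
            rw [← NNReal.coe_le_coe, Real.coe_toNNReal _ (by linarith)]
            exact le_of_lt hsrc.2
          have hb0 : ((b.toNNReal : ℝ≥0):ℝ) = b := Real.coe_toNNReal _ (by linarith)
          have hcomm := congrArg (fun G => valIM (G v)) (F.comm (x := x) (y := b.toNNReal) hxb)
          simp only [LinearMap.comp_apply] at hcomm
          have hz : (intervalModule a b).map hxb v = 0 := by
            apply valIM_inj
            rw [intervalModule_map_coe, if_neg (by rw [hb0]; intro hh; exact lt_irrefl b hh.2),
              zero_mul, valIM_zero']
          rw [hz, map_zero] at hcomm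
          have h0 : valIM ((0 : ((intervalModule c d).shift ε.toNNReal).V b.toNNReal)) = 0 := rfl
          rw [shift_map_coe, hcoe ε hε, hcoe ε hε, hb0,
            if_pos ⟨htgt.1, by linarith⟩, one_mul] at hcomm
          apply valIM_inj
          rw [← hcomm, h0]
          rfl
      · exact absurd (app_zero_tgt a b c d ε.toNNReal F x htgt) hFx
    · exact absurd (app_zero_src a b F x hsrc) hFx
  · rintro ⟨h1, h2, h3⟩
    refine ⟨homOf a b c d ε hε h1 h3, a.toNNReal, fun h0 => ?_⟩
    have ha0 : ((a.toNNReal : ℝ≥0):ℝ) = a := Real.coe_toNNReal _ ha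
    have hmem : (1:ℝ) ∈ intervalSub a b a.toNNReal := by
      rw [intervalSub, if_pos (by rw [ha0]; exact ⟨le_refl a, hab⟩)]
      exact Submodule.mem_top
    set v : (intervalModule a b).V a.toNNReal := ⟨1, hmem⟩ with hv
    have := congrArg (fun G => valIM (G v)) h0
    have hval : valIM ((homOf a b c d ε hε h1 h3).app a.toNNReal v) = 1 := by
      show valIM (appF a b c d ε hε h1 a.toNNReal v) = 1
      rw [appF_val, ha0, if_pos ⟨le_refl a, by linarith⟩, one_mul]
      rfl
    rw [hval] at this
    have h0' : valIM ((0 : (intervalModule a b).V a.toNNReal →ₗ[ℝ]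
      ((intervalModule c d).shift ε.toNNReal).V a.toNNReal) v) = 0 := rfl
    rw [h0'] at this
    exact one_ne_zero this

theorem stmt2 (a b c d : ℝ) (ha : 0 ≤ a) (hab : a < b) (hc : 0 ≤ c) (hcd : c < d)
    (m₁ m₂ r s : ℝ)
    (hm1 : m₁ = max |a - c| |b - d|) (hm2 : m₂ = max ((b - a) / 2) ((d - c) / 2))
    (hr : r = min |a - d| |b - c|) (hs : s = max |a - d| |b - c|) (hm : m₁ < m₂) :
    m₁ < m₂ ∧ m₂ < r ∧ r ≤ s ∧
    (∀ ε : ℝ, m₁ ≤ ε → ε < m₂ →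
      HomNeZero (intervalModule a b) ((intervalModule c d).shift (ε).toNNReal) ∧ HomNeZero (intervalModule c d) ((intervalModule a b).shift (ε).toNNReal) ∧
      (HomNeZero (intervalModule a b) ((intervalModule a b).shift (2*ε).toNNReal) ∨ HomNeZero (intervalModule c d) ((intervalModule c d).shift (2*ε).toNNReal))) ∧
    (∀ ε : ℝ, m₂ ≤ ε → ε < r →
      HomNeZero (intervalModule a b) ((intervalModule c d).shift (ε).toNNReal) ∧ HomNeZero (intervalModule c d) ((intervalModule a b).shift (ε).toNNReal) ∧
      ¬ HomNeZero (intervalModule a b) ((intervalModule a b).shift (2*ε).toNNReal) ∧ ¬ HomNeZero (intervalModule c d) ((intervalModule c d).shift (2*ε).toNNReal)) ∧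
    (∀ ε : ℝ, r ≤ ε → ε < s →
      Xor' (HomNeZero (intervalModule a b) ((intervalModule c d).shift (ε).toNNReal)) (HomNeZero (intervalModule c d) ((intervalModule a b).shift (ε).toNNReal)) ∧
      ¬ HomNeZero (intervalModule a b) ((intervalModule a b).shift (2*ε).toNNReal) ∧ ¬ HomNeZero (intervalModule c d) ((intervalModule c d).shift (2*ε).toNNReal)) ∧
    (∀ ε : ℝ, s ≤ ε →
      ¬ HomNeZero (intervalModule a b) ((intervalModule c d).shift (ε).toNNReal) ∧ ¬ HomNeZero (intervalModule c d) ((intervalModule a b).shift (ε).toNNReal) ∧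
      ¬ HomNeZero (intervalModule a b) ((intervalModule a b).shift (2*ε).toNNReal) ∧ ¬ HomNeZero (intervalModule c d) ((intervalModule c d).shift (2*ε).toNNReal)) := by
  have hm1nn : 0 ≤ m₁ := hm1 ▸ le_trans (abs_nonneg _) (le_max_left _ _)
  have habs : |a - c| < m₂ ∧ |b - d| < m₂ := by
    rw [hm1] at hm; exact max_lt_iff.mp hm
  obtain ⟨hac1, hac2⟩ := abs_lt.mp habs.1
  obtain ⟨hbd1, hbd2⟩ := abs_lt.mp habs.2
  have hpq : m₂ = (b - a) / 2 ∨ m₂ = (d - c) / 2 := by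
    rcases le_total ((b - a) / 2) ((d - c) / 2) with h | h
    · exact Or.inr (by rw [hm2, max_eq_right h])
    · exact Or.inl (by rw [hm2, max_eq_left h])
  have hp : (b - a) / 2 ≤ m₂ := hm2 ▸ le_max_left _ _
  have hq : (d - c) / 2 ≤ m₂ := hm2 ▸ le_max_right _ _
  have had : a < d := by
    by_contra h
    push_neg at h
    rcases hpq with h' | h' <;> linarith
  have hcb : c < b := by
    by_contra h
    push_neg at h
    rcases hpq with h' | h' <;> linarith
  have hrr : r = min (d - a) (b - c) := by
    rw [hr, abs_sub_comm a d, abs_of_pos (by linarith), abs_of_pos (by linarith)]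
  have hss : s = max (d - a) (b - c) := by
    rw [hs, abs_sub_comm a d, abs_of_pos (by linarith), abs_of_pos (by linarith)]
  have hm2da : m₂ < d - a := by rcases hpq with h' | h' <;> linarith
  have hm2bc : m₂ < b - c := by rcases hpq with h' | h' <;> linarith
  have hm2r : m₂ < r := by rw [hrr]; exact lt_min hm2da hm2bc
  have hrs : r ≤ s := by rw [hrr, hss]; exact min_le_max
  have hrda : r ≤ d - a := hrr ▸ min_le_left _ _
  have hrbc : r ≤ b - c := hrr ▸ min_le_right _ _
  refine ⟨hm, hm2r, hrs, ?_, ?_, ?_, ?_⟩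
  · intro ε hε1 hε2
    have hε : 0 ≤ ε := le_trans hm1nn hε1
    have hε' : 0 ≤ 2 * ε := by linarith
    rw [hom_iff a b c d ha hab hcd ε hε, hom_iff c d a b hc hcd hab ε hε,
      hom_iff a b a b ha hab hab (2*ε) hε', hom_iff c d c d hc hcd hcd (2*ε) hε']
    have h1 : c - a ≤ m₁ := by rw [hm1]; calc c - a ≤ |a - c| := by rw [abs_sub_comm]; exact le_abs_self _
                                               _ ≤ _ := le_max_left _ _
    have h2 : d - b ≤ m₁ := by rw [hm1]; calc d - b ≤ |b - d| := by rw [abs_sub_comm]; exact le_abs_self _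
                                               _ ≤ _ := le_max_right _ _
    have h3 : a - c ≤ m₁ := by rw [hm1]; exact le_trans (le_abs_self _) (le_max_left _ _)
    have h4 : b - d ≤ m₁ := by rw [hm1]; exact le_trans (le_abs_self _) (le_max_right _ _)
    refine ⟨⟨by linarith, by linarith, by linarith⟩, ⟨by linarith, by linarith, by linarith⟩, ?_⟩
    rcases hpq with h' | h'
    · exact Or.inl ⟨by linarith, by linarith, by linarith⟩
    · exact Or.inr ⟨by linarith, by linarith, by linarith⟩
  · intro ε hε1 hε2
    have hε : 0 ≤ ε := by linarith
    have hε' : 0 ≤ 2 * ε := by linarith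
    rw [hom_iff a b c d ha hab hcd ε hε, hom_iff c d a b hc hcd hab ε hε,
      hom_iff a b a b ha hab hab (2*ε) hε', hom_iff c d c d hc hcd hcd (2*ε) hε']
    refine ⟨⟨by linarith, by linarith, by linarith⟩, ⟨by linarith, by linarith, by linarith⟩,
      fun h => by linarith [h.2.1], fun h => by linarith [h.2.1]⟩
  · intro ε hε1 hε2
    have hε : 0 ≤ ε := by linarith
    have hε' : 0 ≤ 2 * ε := by linarith
    rw [hom_iff a b c d ha hab hcd ε hε, hom_iff c d a b hc hcd hab ε hε,
      hom_iff a b a b ha hab hab (2*ε) hε', hom_iff c d c d hc hcd hcd (2*ε) hε']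
    refine ⟨?_, fun h => by linarith [h.2.1], fun h => by linarith [h.2.1]⟩
    rcases le_total (d - a) (b - c) with h | h
    · have hre : r = d - a := by rw [hrr, min_eq_left h]
      have hse : s = b - c := by rw [hss, max_eq_right h]
      exact Or.inr ⟨⟨by linarith, by linarith, by linarith⟩, fun hh => by linarith [hh.2.1]⟩
    · have hre : r = b - c := by rw [hrr, min_eq_right h]
      have hse : s = d - a := by rw [hss, max_eq_left h]
      exact Or.inl ⟨⟨by linarith, by linarith, by linarith⟩, fun hh => by linarith [hh.2.1]⟩
  · intro ε hε1
    have hsda : d - a ≤ s := hss ▸ le_max_left _ _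
    have hsbc : b - c ≤ s := hss ▸ le_max_right _ _
    have hε : 0 ≤ ε := by linarith
    have hε' : 0 ≤ 2 * ε := by linarith
    rw [hom_iff a b c d ha hab hcd ε hε, hom_iff c d a b hc hcd hab ε hε,
      hom_iff a b a b ha hab hab (2*ε) hε', hom_iff c d c d hc hcd hcd (2*ε) hε']
    exact ⟨fun h => by linarith [h.2.1], fun h => by linarith [h.2.1],
      fun h => by linarith [h.2.1], fun h => by linarith [h.2.1]⟩
end

section
/- Let M = [a,b) and N = [c,d) be interval modules (0 ≤ a < b, 0 ≤ c < d). Define σ = min S_{M,N} if S_{M,N} ≠ ∅ and σ = 0 otherwise, and τ = min S_{N,M} if S_{N,M} ≠ ∅ and τ = 0 otherwise. Then max{|a−c|, |b−d|} = max{σ, τ}; that is, max{|a−c|,|b−d|} is the parameter value at which the last homomorphism between M and N is born. -/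
open scoped NNReal

lemma intervalSub_eq_top {α β : ℝ} {x : ℝ≥0} (h : α ≤ (x:ℝ) ∧ (x:ℝ) < β) :
    intervalSub α β x = ⊤ := if_pos h

lemma intervalSub_eq_bot {α β : ℝ} {x : ℝ≥0} (h : ¬(α ≤ (x:ℝ) ∧ (x:ℝ) < β)) :
    intervalSub α β x = ⊥ := if_neg h

lemma elem_eq_zero {α β : ℝ} {x : ℝ≥0} (h : ¬(α ≤ (x:ℝ) ∧ (x:ℝ) < β))
    (v : ↥(intervalSub α β x)) : (v:ℝ) = 0 := by
  have hle : intervalSub α β x ≤ ⊥ := le_of_eq (intervalSub_eq_bot h)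
  exact (Submodule.mem_bot ℝ).1 (hle v.2)

lemma interval_map_coe (α β : ℝ) {x y : ℝ≥0} (h : x ≤ y) (v : ↥(intervalSub α β x))
    {w : ↥(intervalSub α β y)} (hw : (intervalModule α β).map h v = w) :
    (w : ℝ) =
      if α ≤ (x:ℝ) ∧ (y:ℝ) < β then (v:ℝ) else 0 := by
  rw [← hw]
  show (((if α ≤ (x:ℝ) ∧ (y:ℝ) < β then (1:ℝ) else 0) • (intervalSub α β x).subtype) v : ℝ)
    = _
  by_cases hc : α ≤ (x:ℝ) ∧ (y:ℝ) < β <;> simp [hc]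

lemma nonzero_map_cond {α β γ δ : ℝ} {x y : ℝ≥0}
    {f : ↥(intervalSub α β x) →ₗ[ℝ] ↥(intervalSub γ δ y)} (hf : f ≠ 0) :
    (α ≤ (x:ℝ) ∧ (x:ℝ) < β) ∧ (γ ≤ (y:ℝ) ∧ (y:ℝ) < δ) := by
  obtain ⟨v, hv⟩ := DFunLike.ne_iff.mp hf
  simp only [LinearMap.zero_apply] at hv
  constructor
  · by_contra h
    exact hv (by rw [show v = 0 from Subtype.ext (elem_eq_zero h v), map_zero])
  · by_contra h
    exact hv (Subtype.ext (elem_eq_zero h _))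

lemma interval_map_zero {α β : ℝ} {x y : ℝ≥0} (h : x ≤ y)
    (hy : ¬(α ≤ (x:ℝ) ∧ (y:ℝ) < β)) (v : ↥(intervalSub α β x)) :
    (intervalModule α β).map h v = 0 := by
  apply Subtype.ext
  rw [interval_map_coe α β h v rfl, if_neg hy]
  rfl

lemma interval_map_inj {α β : ℝ} {x y : ℝ≥0} (h : x ≤ y)
    (hcond : α ≤ (x:ℝ) ∧ (y:ℝ) < β) (v : ↥(intervalSub α β x))
    (hv : (intervalModule α β).map h v = 0) : v = 0 := by
  have h1 := interval_map_coe α β h v rfl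
  rw [hv, if_pos hcond] at h1
  apply Subtype.ext
  exact h1.symm

lemma interval_map_surj {α β : ℝ} {x y : ℝ≥0} (h : x ≤ y)
    (hx : α ≤ (x:ℝ) ∧ (x:ℝ) < β) (w : ↥(intervalSub α β y)) :
    ∃ v, (intervalModule α β).map h v = w := by
  by_cases hy : (y:ℝ) < β
  · have hvmem : ((w:ℝ)) ∈ intervalSub α β x := by
      rw [intervalSub_eq_top hx]; trivial
    exact ⟨⟨(w:ℝ), hvmem⟩, Subtype.ext (by rw [interval_map_coe α β h _ rfl, if_pos ⟨hx.1, hy⟩])⟩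
  · refine ⟨0, ?_⟩
    rw [map_zero]
    have hw0 : (w:ℝ) = 0 := elem_eq_zero (fun hh => hy hh.2) w
    show (0 : ↥(intervalSub α β y)) = w
    exact Subtype.ext hw0.symm

noncomputable def intervalHom (a b c d : ℝ) (t : ℝ≥0) (hca : c ≤ a + t) (hdb : d ≤ b + t) :
    PM.Hom (intervalModule a b) ((intervalModule c d).shift t) where
  app x := LinearMap.codRestrict (intervalSub c d (x + t))
    ((if a ≤ (x:ℝ) ∧ (x:ℝ) + (t:ℝ) < d then (1:ℝ) else 0) • (intervalSub a b x).subtype)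
    (by
      intro v
      by_cases hx : a ≤ (x:ℝ) ∧ (x:ℝ) + (t:ℝ) < d
      · have htop : intervalSub c d (x + t) = ⊤ := intervalSub_eq_top (by
          push_cast
          exact ⟨by linarith [hx.1], hx.2⟩)
        rw [htop]; trivial
      · rw [if_neg hx, zero_smul]
        exact Submodule.zero_mem _)
  comm {x y} h := by
    have hxy : (x:ℝ) ≤ (y:ℝ) := h
    ext v
    apply Subtype.ext
    show (((if a ≤ (y:ℝ) ∧ (y:ℝ) + (t:ℝ) < d then (1:ℝ) else 0) • (intervalSub a b y).subtype)
        ((intervalModule a b).map h v) : ℝ) =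
      (intervalSub c d (y + t)).subtype
        ((intervalModule c d).map (add_le_add h le_rfl)
          ((LinearMap.codRestrict (intervalSub c d (x + t))
            ((if a ≤ (x:ℝ) ∧ (x:ℝ) + (t:ℝ) < d then (1:ℝ) else 0) • (intervalSub a b x).subtype) _) v))
    erw [LinearMap.smul_apply, Submodule.coe_subtype, smul_eq_mul]
    erw [interval_map_coe a b h v rfl, Submodule.coe_subtype, interval_map_coe c d (add_le_add h le_rfl) _ rfl]
    erw [LinearMap.codRestrict_apply, LinearMap.smul_apply, Submodule.coe_subtype,
      smul_eq_mul]
    by_cases hx : a ≤ (x:ℝ) ∧ (x:ℝ) < b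
    · by_cases h5 : (y:ℝ) + (t:ℝ) < d
      · have hA : a ≤ (y:ℝ) ∧ (y:ℝ) + (t:ℝ) < d := ⟨hx.1.trans hxy, h5⟩
        have hB : a ≤ (x:ℝ) ∧ (y:ℝ) < b := ⟨hx.1, by linarith⟩
        have hC : c ≤ ((x + t : ℝ≥0):ℝ) ∧ ((y + t : ℝ≥0):ℝ) < d := by
          push_cast; exact ⟨by linarith [hx.1], h5⟩
        have hD : a ≤ (x:ℝ) ∧ (x:ℝ) + (t:ℝ) < d := ⟨hx.1, by linarith⟩
        rw [if_pos hA, if_pos hB, if_pos hC, if_pos hD]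
      · have hA : ¬(a ≤ (y:ℝ) ∧ (y:ℝ) + (t:ℝ) < d) := fun hh => h5 hh.2
        have hC : ¬(c ≤ ((x + t : ℝ≥0):ℝ) ∧ ((y + t : ℝ≥0):ℝ) < d) := by
          push_cast; exact fun hh => h5 hh.2
        rw [if_neg hA, if_neg hC]
        ring
    · have hB : ¬(a ≤ (x:ℝ) ∧ (y:ℝ) < b) := fun hh => hx ⟨hh.1, lt_of_le_of_lt hxy hh.2⟩
      simp [elem_eq_zero hx v, hB]

lemma homNeZero_shift_iff (a b c d : ℝ) (ha : 0 ≤ a) (hab : a < b) (hc : 0 ≤ c)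
    (hcd : c < d) (t : ℝ≥0) :
    HomNeZero (intervalModule a b) ((intervalModule c d).shift t) ↔
      (c ≤ a + t ∧ a + (t:ℝ) < d ∧ d ≤ b + t) := by
  constructor
  · rintro ⟨F, x₀, hF⟩
    have hcond := nonzero_map_cond (f := F.app x₀) hF
    obtain ⟨⟨hax, hxb⟩, hcx, hxd⟩ := hcond
    have hcx' : c ≤ (x₀:ℝ) + t := by
      have he : ((x₀ + t : ℝ≥0):ℝ) = (x₀:ℝ) + t := by push_cast; ring
      linarith [he ▸ hcx]
    obtain ⟨w, hw⟩ := DFunLike.ne_iff.mp hF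
    simp only [LinearMap.zero_apply] at hw
    set a' : ℝ≥0 := a.toNNReal with ha'
    have ha'c : (a':ℝ) = a := Real.coe_toNNReal a ha
    have h1 : a' ≤ x₀ := by
      rw [← NNReal.coe_le_coe, ha'c]; exact hax
    have hcomm := F.comm h1
    obtain ⟨v, hmap⟩ := interval_map_surj (α := a) (β := b) h1 ⟨le_of_eq ha'c.symm, by rw [ha'c]; exact hab⟩ w
    have happ : F.app a' v ≠ 0 := by
      intro h0
      have hc2 := congrArg (fun g => g v) hcomm
      simp only [LinearMap.comp_apply] at hc2
      rw [hmap, h0, map_zero] at hc2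
      exact hw hc2
    have hFa : F.app a' ≠ 0 := fun h0 => happ (by rw [h0]; rfl)
    obtain ⟨-, hca', ha'd⟩ := nonzero_map_cond (f := F.app a') hFa
    have hcast : ((a' + t : ℝ≥0):ℝ) = a + t := by push_cast [ha'c]; ring
    rw [hcast] at hca' ha'd
    refine ⟨hca', ha'd, ?_⟩
    by_contra hbd
    push_neg at hbd
    set y : ℝ≥0 := b.toNNReal with hy
    have hyc : (y:ℝ) = b := Real.coe_toNNReal b (by linarith)
    have h2 : x₀ ≤ y := by
      rw [← NNReal.coe_le_coe, hyc]; exact le_of_lt hxb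
    have hcomm2 := F.comm h2
    have hth := congrArg (fun g => g w) hcomm2
    simp only [LinearMap.comp_apply] at hth
    have hzero : (intervalModule a b).map h2 w = 0 :=
      interval_map_zero h2 (by rw [hyc]; exact fun hh => lt_irrefl b hh.2) w
    rw [hzero, map_zero] at hth
    have hfw : F.app x₀ w = 0 := by
      apply interval_map_inj (α := c) (β := d) (add_le_add h2 le_rfl)
      · constructor
        · push_cast; exact hcx'
        · push_cast [hyc]; linarith
      · exact hth.symm
    exact hw hfw
  · rintro ⟨hca, had, hdb⟩
    refine ⟨intervalHom a b c d t (by linarith) (by linarith), a.toNNReal, ?_⟩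
    have ha'c : ((a.toNNReal : ℝ≥0):ℝ) = a := Real.coe_toNNReal a ha
    have hvmem : (1:ℝ) ∈ intervalSub a b a.toNNReal := by
      rw [intervalSub_eq_top ⟨le_of_eq ha'c.symm, by rw [ha'c]; exact hab⟩]
      trivial
    intro h0
    have h1 := congrArg (fun g => g (⟨1, hvmem⟩ : ↥(intervalSub a b a.toNNReal))) h0
    change _ = (0 : ↥(intervalSub c d (a.toNNReal + t))) at h1
    have h2 := congrArg (fun z => ((intervalSub c d (a.toNNReal + t)).subtype z)) h1
    simp only [map_zero] at h2
    have h3 : ((intervalSub c d (a.toNNReal + t)).subtype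
        ((intervalHom a b c d t (by linarith) (by linarith)).app a.toNNReal ⟨1, hvmem⟩)) =
        (if a ≤ (a.toNNReal:ℝ) ∧ (a.toNNReal:ℝ) + (t:ℝ) < d then (1:ℝ) else 0) * 1 := rfl
    rw [h3] at h2
    rw [if_pos ⟨le_of_eq ha'c.symm, by rw [ha'c]; linarith⟩] at h2
    norm_num at h2

lemma Sset_interval (a b c d : ℝ) (ha : 0 ≤ a) (hab : a < b) (hc : 0 ≤ c) (hcd : c < d) :
    Sset (intervalModule a b) (intervalModule c d) =
      {x : ℝ | 0 ≤ x ∧ c ≤ a + x ∧ a + x < d ∧ d ≤ b + x} := by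
  ext x
  simp only [Sset, Set.mem_setOf_eq]
  constructor
  · rintro ⟨hx, hH⟩
    have h := (homNeZero_shift_iff a b c d ha hab hc hcd x.toNNReal).1 hH
    rw [Real.coe_toNNReal x hx] at h
    exact ⟨hx, h.1, h.2.1, h.2.2⟩
  · rintro ⟨hx, h1, h2, h3⟩
    refine ⟨hx, (homNeZero_shift_iff a b c d ha hab hc hcd x.toNNReal).2 ?_⟩
    rw [Real.coe_toNNReal x hx]
    exact ⟨h1, h2, h3⟩

lemma sigma_val (a b c d σ : ℝ) (ha : 0 ≤ a) (hab : a < b) (hc : 0 ≤ c) (hcd : c < d)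
    (hσ1 : (Sset (intervalModule a b) (intervalModule c d)).Nonempty →
      IsLeast (Sset (intervalModule a b) (intervalModule c d)) σ)
    (hσ2 : ¬ (Sset (intervalModule a b) (intervalModule c d)).Nonempty → σ = 0) :
    σ = if a < d then max (max 0 (c - a)) (d - b) else 0 := by
  rw [Sset_interval a b c d ha hab hc hcd] at hσ1 hσ2
  by_cases had : a < d
  · rw [if_pos had]
    set L := max (max 0 (c - a)) (d - b) with hL
    have hmem : L ∈ {x : ℝ | 0 ≤ x ∧ c ≤ a + x ∧ a + x < d ∧ d ≤ b + x} := by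
      refine ⟨le_max_of_le_left (le_max_left _ _), ?_, ?_, ?_⟩
      · have h1 : c - a ≤ L := le_max_of_le_left (le_max_right 0 (c - a))
        linarith
      · have h1 : (0:ℝ) < d - a := by linarith
        have h2 : c - a < d - a := by linarith
        have h3 : d - b < d - a := by linarith
        have : L < d - a := by
          rw [hL]
          exact max_lt (max_lt h1 h2) h3
        linarith
      · linarith [le_max_right (max 0 (c - a)) (d - b)]
    have hleast : IsLeast {x : ℝ | 0 ≤ x ∧ c ≤ a + x ∧ a + x < d ∧ d ≤ b + x} L := by
      refine ⟨hmem, ?_⟩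
      rintro x ⟨h0, h1, h2, h3⟩
      exact max_le (max_le h0 (by linarith)) (by linarith)
    exact (hσ1 ⟨L, hmem⟩).unique hleast
  · rw [if_neg had]
    apply hσ2
    rintro ⟨x, h0, h1, h2, h3⟩
    push_neg at had
    linarith

set_option maxHeartbeats 2000000 in
theorem stmt3 (a b c d σ τ : ℝ) (ha : 0 ≤ a) (hab : a < b) (hc : 0 ≤ c) (hcd : c < d)
    (hσ1 : (Sset (intervalModule a b) (intervalModule c d)).Nonempty → IsLeast (Sset (intervalModule a b) (intervalModule c d)) σ)
    (hσ2 : ¬ (Sset (intervalModule a b) (intervalModule c d)).Nonempty → σ = 0)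
    (hτ1 : (Sset (intervalModule c d) (intervalModule a b)).Nonempty → IsLeast (Sset (intervalModule c d) (intervalModule a b)) τ)
    (hτ2 : ¬ (Sset (intervalModule c d) (intervalModule a b)).Nonempty → τ = 0) :
    max |a - c| |b - d| = max σ τ := by
  have hσ := sigma_val a b c d σ ha hab hc hcd hσ1 hσ2
  have hτ := sigma_val c d a b τ hc hcd ha hab hτ1 hτ2
  rw [hσ, hτ]
  by_cases h1 : a < d
  · by_cases h2 : c < b
    · rw [if_pos h1, if_pos h2]
      rcases abs_cases (a - c) with ⟨e1, f1⟩ | ⟨e1, f1⟩ <;>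
        rcases abs_cases (b - d) with ⟨e2, f2⟩ | ⟨e2, f2⟩ <;>
        rw [e1, e2] <;> simp only [max_def] <;> split_ifs <;> linarith
    · push_neg at h2
      rw [if_pos h1, if_neg (by linarith : ¬ c < b)]
      rcases abs_cases (a - c) with ⟨e1, f1⟩ | ⟨e1, f1⟩ <;>
        rcases abs_cases (b - d) with ⟨e2, f2⟩ | ⟨e2, f2⟩ <;>
        rw [e1, e2] <;> simp only [max_def] <;> split_ifs <;> linarith
  · push_neg at h1
    have h2 : c < b := by linarith
    rw [if_neg (by linarith : ¬ a < d), if_pos h2]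
    rcases abs_cases (a - c) with ⟨e1, f1⟩ | ⟨e1, f1⟩ <;>
      rcases abs_cases (b - d) with ⟨e2, f2⟩ | ⟨e2, f2⟩ <;>
      rw [e1, e2] <;> simp only [max_def] <;> split_ifs <;> linarith
end
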